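/- Let r ≥ 1, n ≥ 1 and s = (s_1, …, s_n) ∈ ℝ_{>0}^n with s_i ≤ s_{i+1} for 1 ≤ i ≤ n−1, and let x ∈ ℝ with s_n ≤ x. Then ε̂^{r,n}_s(x) = q^{r+n}·ε̂^{r,n}_s(q^{−r}·x). -/

import Mathlib

noncomputable section

open scoped BigOperators

open Classical in
/-- The absolute value `|y| = q^{deg y}` (and `|0| = 0`) on `A = F_q[T]`. -/
def absA (Fq : Type) [Field Fq] [Fintype Fq] (y : Polynomial Fq) : ℝ :=
  if y = 0 then 0 else (Fintype.card Fq : ℝ) ^ y.natDegree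

/-- `ε^{r,n}_s(x) = x + Σ_{y ∈ A^n, y ≠ 0} max(x − max_{1≤i≤n} |y_i|^r·s_i, 0)`.
(For each `x` only finitely many summands are nonzero, so the `tsum` agrees with the
intended sum; the inner `⨆` over the finite type `Fin n` is the maximum.) -/
def epsFun (Fq : Type) [Field Fq] [Fintype Fq] (r n : ℕ) (s : Fin n → ℝ) (x : ℝ) : ℝ :=
  x + ∑' y : {y : Fin n → Polynomial Fq // y ≠ 0},
      max (x - ⨆ i : Fin n, (absA Fq (y.1 i)) ^ r * s i) 0

/-- `δ^{r,n}(s) = ((q−1)/(q^{r+n}−1))·Σ_{i=1}^n q^{n−i}·ε^{r,i−1}_{(s_1,…,s_{i−1})}(s_i)`. -/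
def deltaFun (Fq : Type) [Field Fq] [Fintype Fq] (r n : ℕ) (s : Fin n → ℝ) : ℝ :=
  ((Fintype.card Fq : ℝ) - 1) / ((Fintype.card Fq : ℝ) ^ (r + n) - 1) *
    ∑ i : Fin n, (Fintype.card Fq : ℝ) ^ (n - 1 - (i : ℕ)) *
      epsFun Fq r i (fun j : Fin (i : ℕ) => s (Fin.castLE i.isLt.le j)) (s i)

/-- `ε̂^{r,n}_s(x) = ε^{r,n}_s(x) − δ^{r,n}(s)`. -/
def epsHat (Fq : Type) [Field Fq] [Fintype Fq] (r n : ℕ) (s : Fin n → ℝ) (x : ℝ) : ℝ :=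
  epsFun Fq r n s x - deltaFun Fq r n s

namespace St11

variable (Fq : Type) [Field Fq] [Fintype Fq]

lemma one_lt_q : (1 : ℝ) < (Fintype.card Fq : ℝ) := by
  exact_mod_cast Fintype.one_lt_card

lemma q_pos : (0 : ℝ) < (Fintype.card Fq : ℝ) := lt_trans one_pos (one_lt_q Fq)

@[simp] lemma absA_zero : absA Fq 0 = 0 := by simp [absA]

lemma absA_of_ne {p : Polynomial Fq} (hp : p ≠ 0) :
    absA Fq p = (Fintype.card Fq : ℝ) ^ p.natDegree := by simp [absA, hp]

lemma absA_nonneg (p : Polynomial Fq) : 0 ≤ absA Fq p := by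
  rcases eq_or_ne p 0 with rfl | hp
  · simp
  · rw [absA_of_ne Fq hp]; positivity

lemma one_le_absA {p : Polynomial Fq} (hp : p ≠ 0) : 1 ≤ absA Fq p := by
  rw [absA_of_ne Fq hp]
  exact one_le_pow₀ (le_of_lt (one_lt_q Fq))

lemma absA_X_mul (p : Polynomial Fq) :
    absA Fq (Polynomial.X * p) = (Fintype.card Fq : ℝ) * absA Fq p := by
  rcases eq_or_ne p 0 with rfl | hp
  · simp
  · have hX : (Polynomial.X : Polynomial Fq) ≠ 0 := Polynomial.X_ne_zero
    have hXp : Polynomial.X * p ≠ 0 := mul_ne_zero hX hp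
    rw [absA_of_ne Fq hXp, absA_of_ne Fq hp,
      Polynomial.natDegree_mul hX hp, Polynomial.natDegree_X]
    ring

lemma absA_X_mul_add_C {p : Polynomial Fq} (hp : p ≠ 0) (c : Fq) :
    absA Fq (Polynomial.X * p + Polynomial.C c) = absA Fq (Polynomial.X * p) := by
  have hX : (Polynomial.X : Polynomial Fq) ≠ 0 := Polynomial.X_ne_zero
  have hXp : Polynomial.X * p ≠ 0 := mul_ne_zero hX hp
  have hd : (Polynomial.X * p).natDegree = p.natDegree + 1 := by
    rw [Polynomial.natDegree_mul hX hp, Polynomial.natDegree_X]; ring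
  have hne : Polynomial.X * p + Polynomial.C c ≠ 0 := by
    intro h
    have : (Polynomial.X * p + Polynomial.C c).natDegree = p.natDegree + 1 := by
      rw [Polynomial.natDegree_add_C, hd]
    rw [h] at this
    simp at this
  rw [absA_of_ne Fq hne, absA_of_ne Fq hXp, Polynomial.natDegree_add_C]

lemma absA_C {c : Fq} (hc : c ≠ 0) : absA Fq (Polynomial.C c) = 1 := by
  rw [absA_of_ne Fq (by simpa using hc), Polynomial.natDegree_C, pow_zero]

open Classical in
/-- the finset of polynomials of degree ≤ d (including 0) -/
def polyFinset (d : ℕ) : Finset (Polynomial Fq) :=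
  (Finset.univ : Finset (Fin (d + 1) → Fq)).image
    (fun c => ∑ i : Fin (d + 1), Polynomial.C (c i) * Polynomial.X ^ (i : ℕ))

lemma mem_polyFinset {d : ℕ} {p : Polynomial Fq} (hp : p.natDegree ≤ d) :
    p ∈ polyFinset Fq d := by
  classical
  have hrep : p = ∑ i : Fin (d + 1), Polynomial.C ((fun i : Fin (d + 1) => p.coeff (i : ℕ)) i) * Polynomial.X ^ (i : ℕ) := by
    conv_lhs => rw [p.as_sum_range' (d + 1) (by omega)]
    rw [Fin.sum_univ_eq_sum_range (fun i => Polynomial.C (p.coeff i) * Polynomial.X ^ i)]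
    exact Finset.sum_congr rfl (fun i _ => by rw [Polynomial.C_mul_X_pow_eq_monomial])
  unfold polyFinset
  rw [hrep]
  exact Finset.mem_image_of_mem _ (Finset.mem_univ _)

lemma big_of_not_mem {d : ℕ} {p : Polynomial Fq} (hp : p ∉ polyFinset Fq d) :
    (Fintype.card Fq : ℝ) ^ d ≤ absA Fq p := by
  have hne : p ≠ 0 := by rintro rfl; exact hp (mem_polyFinset Fq (by simp))
  have hdeg : d ≤ p.natDegree := by
    by_contra h
    exact hp (mem_polyFinset Fq (by omega))
  rw [absA_of_ne Fq hne]
  exact pow_le_pow_right₀ (le_of_lt (one_lt_q Fq)) hdeg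

end St11

namespace St11

variable (Fq : Type) [Field Fq] [Fintype Fq]

/-- `m(y) = max_i |y_i|^r s_i` -/
def mfun (r n : ℕ) (s : Fin n → ℝ) (y : Fin n → Polynomial Fq) : ℝ :=
  ⨆ i : Fin n, (absA Fq (y i)) ^ r * s i

/-- one summand -/
def termf (r n : ℕ) (s : Fin n → ℝ) (x : ℝ) (y : Fin n → Polynomial Fq) : ℝ :=
  max (x - mfun Fq r n s y) 0

/-- the full sum `E(x) = Σ_{y ∈ A^n} max(x − m(y), 0)` -/
def Efun (r n : ℕ) (s : Fin n → ℝ) (x : ℝ) : ℝ :=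
  ∑' y : Fin n → Polynomial Fq, termf Fq r n s x y

lemma mfun_nonneg {r n : ℕ} {s : Fin n → ℝ} (hs : ∀ i, 0 ≤ s i)
    (y : Fin n → Polynomial Fq) : 0 ≤ mfun Fq r n s y := by
  rcases isEmpty_or_nonempty (Fin n) with h | h
  · rw [mfun, Real.iSup_of_isEmpty]
  · rw [mfun]
    refine le_trans ?_ (le_ciSup (Set.Finite.bddAbove (Set.finite_range
      (fun i : Fin n => (absA Fq (y i)) ^ r * s i))) (Classical.arbitrary (Fin n)))
    exact mul_nonneg (pow_nonneg (absA_nonneg Fq _) _) (hs _)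

lemma le_mfun {r n : ℕ} {s : Fin n → ℝ} (y : Fin n → Polynomial Fq) (i : Fin n) :
    (absA Fq (y i)) ^ r * s i ≤ mfun Fq r n s y := by
  rw [mfun]
  exact le_ciSup (Set.Finite.bddAbove (Set.finite_range
    (fun i : Fin n => (absA Fq (y i)) ^ r * s i))) i

lemma termf_nonneg {r n : ℕ} {s : Fin n → ℝ} {x : ℝ} (y : Fin n → Polynomial Fq) :
    0 ≤ termf Fq r n s x y := le_max_right _ _

lemma termf_eq_zero {r n : ℕ} {s : Fin n → ℝ} {x : ℝ} {y : Fin n → Polynomial Fq}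
    (i : Fin n) (h : x ≤ (absA Fq (y i)) ^ r * s i) : termf Fq r n s x y = 0 :=
  max_eq_right (by linarith [le_mfun Fq (r := r) (s := s) y i])

/-- support finset for `termf` -/
lemma exists_support_finset (r n : ℕ) (hr : 1 ≤ r) (s : Fin n → ℝ) (hs : ∀ i, 0 < s i) (x : ℝ) :
    ∃ S : Finset (Fin n → Polynomial Fq), ∀ y ∉ S, termf Fq r n s x y = 0 := by
  classical
  have hq := one_lt_q Fq
  have hD : ∀ i : Fin n, ∃ d : ℕ, x / s i < (Fintype.card Fq : ℝ) ^ d :=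
    fun i => pow_unbounded_of_one_lt _ hq
  choose D hD using hD
  refine ⟨Fintype.piFinset (fun i => polyFinset Fq (D i)), fun y hy => ?_⟩
  rw [Fintype.mem_piFinset] at hy
  push_neg at hy
  obtain ⟨i, hi⟩ := hy
  have h1 : (Fintype.card Fq : ℝ) ^ (D i) ≤ absA Fq (y i) := big_of_not_mem Fq hi
  have hyi : y i ≠ 0 := by
    rintro h
    exact hi (mem_polyFinset Fq (by rw [h]; simp))
  have h2 : absA Fq (y i) ≤ (absA Fq (y i)) ^ r :=
    le_self_pow₀ (one_le_absA Fq hyi) (by omega)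
  have h3 : x ≤ (absA Fq (y i)) ^ r * s i := by
    have hsi := hs i
    have : x / s i < (absA Fq (y i)) ^ r := lt_of_lt_of_le (hD i) (le_trans h1 h2)
    calc x = (x / s i) * s i := by field_simp
    _ ≤ (absA Fq (y i)) ^ r * s i := by nlinarith
  exact termf_eq_zero Fq i h3

lemma summable_termf {r n : ℕ} (hr : 1 ≤ r) {s : Fin n → ℝ} (hs : ∀ i, 0 < s i) (x : ℝ) :
    Summable (termf Fq r n s x) := by
  obtain ⟨S, hS⟩ := exists_support_finset Fq r n hr s hs x
  exact summable_of_ne_finset_zero hS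

lemma Efun_zero {r n : ℕ} {s : Fin n → ℝ} (hs : ∀ i, 0 ≤ s i) : Efun Fq r n s 0 = 0 := by
  rw [Efun]
  have : ∀ y : Fin n → Polynomial Fq, termf Fq r n s 0 y = 0 := by
    intro y
    exact max_eq_right (by linarith [mfun_nonneg Fq (r := r) hs y])
  simp only [this, tsum_zero]

end St11

namespace St11

variable (Fq : Type) [Field Fq] [Fintype Fq]

/-- splitting a sup over `Fin (n+1)` -/
lemma ciSup_split {n : ℕ} (f : Fin (n + 1) → ℝ) (hf : ∀ i, 0 ≤ f i) :
    ⨆ i, f i = max (f (Fin.last n)) (⨆ i : Fin n, f (Fin.castSucc i)) := by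
  apply le_antisymm
  · refine ciSup_le (fun i => ?_)
    refine Fin.lastCases ?_ (fun j => ?_) i
    · exact le_max_left _ _
    · exact le_trans (le_ciSup (f := fun i : Fin n => f (Fin.castSucc i)) (Set.Finite.bddAbove (Set.finite_range _)) j) (le_max_right _ _)
  · refine max_le (le_ciSup (Set.Finite.bddAbove (Set.finite_range f)) _) ?_
    rcases Nat.eq_zero_or_pos n with rfl | hn
    · rw [Real.iSup_of_isEmpty]
      exact le_trans (hf 0) (le_ciSup (Set.Finite.bddAbove (Set.finite_range f)) 0)
    · have : Nonempty (Fin n) := ⟨⟨0, hn⟩⟩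
      exact ciSup_le (fun j => le_ciSup (Set.Finite.bddAbove (Set.finite_range f)) _)

/-- the basic pointwise identity -/
lemma max_sub_max (a b x : ℝ) :
    max (x - max b a) 0 = max (x - a) 0 - max (min x b - a) 0 := by
  rcases le_total b a with h | h
  · rw [max_eq_right h, max_eq_right (by rcases le_total x b with h2 | h2 <;> simp [min_eq_left, min_eq_right, h2] <;> linarith : min x b - a ≤ 0)]
    ring
  · rw [max_eq_left h]
    rcases le_total x b with h2 | h2
    · rw [min_eq_left h2, max_eq_right (by linarith : x - b ≤ 0)]
      ring
    · rw [min_eq_right h2, max_eq_left (by linarith : 0 ≤ x - b),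
        max_eq_left (by linarith : 0 ≤ x - a), max_eq_left (by linarith : 0 ≤ b - a)]
      ring

/-- `m` of a snoc tuple -/
lemma mfun_snoc {r n : ℕ} (hr : 1 ≤ r) (s : Fin (n + 1) → ℝ) (hs : ∀ i, 0 ≤ s i)
    (y : Fin n → Polynomial Fq) (p : Polynomial Fq) :
    mfun Fq r (n + 1) s (Fin.snoc y p) =
      max ((absA Fq p) ^ r * s (Fin.last n))
        (mfun Fq r n (fun j => s (Fin.castSucc j)) (fun j => y j)) := by
  rw [mfun, ciSup_split _ (fun i => mul_nonneg (pow_nonneg (absA_nonneg Fq _) _) (hs _))]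
  congr 1
  · rw [Fin.snoc_last]
  · rw [mfun]
    congr 1
    funext j
    rw [Fin.snoc_castSucc]

/-- `termf` of a snoc tuple -/
lemma termf_snoc {r n : ℕ} (hr : 1 ≤ r) (s : Fin (n + 1) → ℝ) (hs : ∀ i, 0 ≤ s i) (x : ℝ)
    (y : Fin n → Polynomial Fq) (p : Polynomial Fq) :
    termf Fq r (n + 1) s x (Fin.snoc y p) =
      termf Fq r n (fun j => s (Fin.castSucc j)) x y -
      termf Fq r n (fun j => s (Fin.castSucc j)) (min x ((absA Fq p) ^ r * s (Fin.last n))) y := by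
  rw [termf, mfun_snoc Fq hr s hs, max_sub_max, termf, termf]

/-- decomposition `p = X u + c` as an equivalence -/
def polyEquiv : Polynomial Fq × Fq ≃ Polynomial Fq where
  toFun z := Polynomial.X * z.1 + Polynomial.C z.2
  invFun p := (p.divX, p.coeff 0)
  left_inv := by
    rintro ⟨u, c⟩
    refine Prod.ext ?_ ?_
    · show (Polynomial.X * u + Polynomial.C c).divX = u
      ext m
      rw [Polynomial.coeff_divX, Polynomial.coeff_add, Polynomial.coeff_C,
        if_neg (Nat.succ_ne_zero m), Polynomial.coeff_X_mul]
      ring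
    · show (Polynomial.X * u + Polynomial.C c).coeff 0 = c
      rw [Polynomial.coeff_add, mul_comm, Polynomial.coeff_mul_X_zero, Polynomial.coeff_C,
        if_pos rfl, zero_add]
  right_inv p := Polynomial.X_mul_divX_add p

end St11

namespace St11

open Polynomial in
lemma divX_X_mul {Fq : Type} [Field Fq] (u : Polynomial Fq) : (Polynomial.X * u).divX = u := by
  ext m
  rw [Polynomial.coeff_divX, Polynomial.coeff_X_mul]

variable (Fq : Type) [Field Fq] [Fintype Fq]

/-- Recursion in the last variable. -/
lemma Efun_succ {r n : ℕ} (hr : 1 ≤ r) (s : Fin (n + 1) → ℝ) (hs : ∀ i, 0 < s i)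
    (x : ℝ) :
    Efun Fq r (n + 1) s x =
      ∑' p : Polynomial Fq,
        (Efun Fq r n (fun j => s (Fin.castSucc j)) x -
          Efun Fq r n (fun j => s (Fin.castSucc j))
            (min x ((absA Fq p) ^ r * s (Fin.last n)))) := by
  classical
  set s' : Fin n → ℝ := fun j => s (Fin.castSucc j) with hs'
  have hs'pos : ∀ j, 0 < s' j := fun j => hs _
  have hsnn : ∀ i, 0 ≤ s i := fun i => (hs i).le
  set e := Fin.snocEquiv (fun _ : Fin (n + 1) => Polynomial Fq) with he
  have h1 : Efun Fq r (n + 1) s x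
      = ∑' z : Polynomial Fq × (Fin n → Polynomial Fq), termf Fq r (n + 1) s x (e z) :=
    (e.tsum_eq (termf Fq r (n + 1) s x)).symm
  have hsum : Summable (fun z : Polynomial Fq × (Fin n → Polynomial Fq) =>
      termf Fq r (n + 1) s x (e z)) :=
    (e.summable_iff (f := termf Fq r (n + 1) s x)).2 (summable_termf Fq hr hs x)
  have hterm : ∀ (p : Polynomial Fq) (y : Fin n → Polynomial Fq),
      termf Fq r (n + 1) s x (e (p, y)) =
        termf Fq r n s' x y -
          termf Fq r n s' (min x ((absA Fq p) ^ r * s (Fin.last n))) y := by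
    intro p y
    have : e (p, y) = Fin.snoc y p := rfl
    rw [this, termf_snoc Fq hr s hsnn]
  have hfib : ∀ p : Polynomial Fq, Summable (fun y => termf Fq r (n + 1) s x (e (p, y))) :=
    fun p => ((summable_termf Fq hr hs'pos x).sub (summable_termf Fq hr hs'pos _)).congr
      (fun y => (hterm p y).symm)
  rw [h1, Summable.tsum_prod' hsum hfib]
  refine tsum_congr (fun p => ?_)
  calc (∑' y, termf Fq r (n + 1) s x (e (p, y)))
      = ∑' y, (termf Fq r n s' x y -
          termf Fq r n s' (min x ((absA Fq p) ^ r * s (Fin.last n))) y) :=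
        tsum_congr (fun y => hterm p y)
    _ = _ := by
        rw [Summable.tsum_sub (summable_termf Fq hr hs'pos x) (summable_termf Fq hr hs'pos _),
          Efun, Efun]

/-- The summand function of the recursion. -/
def hfun (r n : ℕ) (s : Fin n → ℝ) (t x : ℝ) (p : Polynomial Fq) : ℝ :=
  Efun Fq r n s x - Efun Fq r n s (min x ((absA Fq p) ^ r * t))

lemma hfun_support {r n : ℕ} (hr : 1 ≤ r) {s : Fin n → ℝ} {t x : ℝ} (ht : 0 < t) :
    ∃ D : ℕ, ∀ p ∉ polyFinset Fq D, hfun Fq r n s t x p = 0 := by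
  obtain ⟨D, hD⟩ := pow_unbounded_of_one_lt (x / t) (one_lt_q Fq)
  refine ⟨D, fun p hp => ?_⟩
  have h1 : (Fintype.card Fq : ℝ) ^ D ≤ absA Fq p := big_of_not_mem Fq hp
  have hne : p ≠ 0 := by rintro rfl; exact hp (mem_polyFinset Fq (by simp))
  have h2 : absA Fq p ≤ (absA Fq p) ^ r := le_self_pow₀ (one_le_absA Fq hne) (by omega)
  have h3 : x ≤ (absA Fq p) ^ r * t := by
    have : x / t < (absA Fq p) ^ r := lt_of_lt_of_le hD (le_trans h1 h2)
    calc x = (x / t) * t := by field_simp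
    _ ≤ (absA Fq p) ^ r * t := by nlinarith
  rw [hfun, min_eq_left h3, sub_self]

lemma summable_hfun {r n : ℕ} (hr : 1 ≤ r) {s : Fin n → ℝ} {t x : ℝ} (ht : 0 < t) :
    Summable (hfun Fq r n s t x) := by
  obtain ⟨D, hD⟩ := hfun_support Fq hr (s := s) (x := x) ht
  exact summable_of_ne_finset_zero hD

lemma summable_hfun_X {r n : ℕ} (hr : 1 ≤ r) {s : Fin n → ℝ} {t x : ℝ} (ht : 0 < t) :
    Summable (fun u => hfun Fq r n s t x (Polynomial.X * u)) := by
  classical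
  obtain ⟨D, hD⟩ := hfun_support Fq hr (s := s) (x := x) ht
  refine summable_of_ne_finset_zero (s := (polyFinset Fq D).image Polynomial.divX)
    (fun u hu => ?_)
  by_contra h
  refine hu (Finset.mem_image.2 ⟨Polynomial.X * u, ?_, divX_X_mul u⟩)
  by_contra h2
  exact h (hD _ h2)

/-- The reindexing identity. -/
lemma hfun_reindex {r n : ℕ} (hr : 1 ≤ r) {s : Fin n → ℝ} (hs : ∀ i, 0 ≤ s i)
    {t x : ℝ} (ht : 0 < t) (htx : t ≤ x) :
    ∑' p, hfun Fq r n s t x p =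
      (Fintype.card Fq : ℝ) * (∑' u, hfun Fq r n s t x (Polynomial.X * u)) -
        ((Fintype.card Fq : ℝ) - 1) * Efun Fq r n s t := by
  classical
  set q : ℝ := (Fintype.card Fq : ℝ) with hq
  set h := hfun Fq r n s t x with hh
  set Ex := Efun Fq r n s x with hEx
  set Et := Efun Fq r n s t with hEt
  have hx0 : (0:ℝ) ≤ x := le_trans ht.le htx
  have h0 : h 0 = Ex := by
    rw [hh, hfun, absA_zero, zero_pow (by omega : r ≠ 0), zero_mul,
      min_eq_right hx0, Efun_zero Fq hs, sub_zero]
  have hC : ∀ c : Fq, c ≠ 0 → h (Polynomial.C c) = Ex - Et := by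
    intro c hc
    rw [hh, hfun, absA_C Fq hc, one_pow, one_mul, min_eq_right htx]
  have hCval : ∀ c : Fq, h (Polynomial.C c) = (Ex - Et) + (if c = 0 then Et else 0) := by
    intro c
    by_cases hc : c = 0
    · subst hc
      rw [Polynomial.C_0, h0, if_pos rfl]; ring
    · rw [hC c hc, if_neg hc]; ring
  have hXC : ∀ u : Polynomial Fq, u ≠ 0 → ∀ c : Fq,
      h (Polynomial.X * u + Polynomial.C c) = h (Polynomial.X * u) := by
    intro u hu c
    rw [hh, hfun, hfun, absA_X_mul_add_C Fq hu]
  have hsump : Summable (fun z : Polynomial Fq × Fq => h (polyEquiv Fq z)) :=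
    ((polyEquiv Fq).summable_iff (f := h)).2 (summable_hfun Fq hr (s := s) (x := x) ht)
  have hchain : ∑' p, h p = ∑' u : Polynomial Fq, ∑' c : Fq, h (polyEquiv Fq (u, c)) := by
    rw [← (polyEquiv Fq).tsum_eq h, Summable.tsum_prod' hsump (fun u => Summable.of_finite)]
  have hinner : ∀ u : Polynomial Fq, (∑' c : Fq, h (polyEquiv Fq (u, c))) =
      q * h (Polynomial.X * u) + (if u = 0 then (1 - q) * Et else 0) := by
    intro u
    rw [tsum_fintype]
    by_cases hu : u = 0
    · subst hu
      rw [if_pos rfl]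
      have : ∀ c : Fq, h (polyEquiv Fq (0, c)) = (Ex - Et) + (if c = 0 then Et else 0) := by
        intro c
        have : polyEquiv Fq (0, c) = Polynomial.C c := by
          show Polynomial.X * 0 + Polynomial.C c = Polynomial.C c
          rw [mul_zero, zero_add]
        rw [this, hCval]
      rw [Finset.sum_congr rfl (fun c _ => this c), Finset.sum_add_distrib,
        Finset.sum_const, Finset.card_univ]
      have hite : (∑ c : Fq, if c = 0 then Et else 0) = Et := by simp
      rw [hite, mul_zero, h0, nsmul_eq_mul]
      ring
    · rw [if_neg hu]
      have : ∀ c : Fq, h (polyEquiv Fq (u, c)) = h (Polynomial.X * u) := fun c => hXC u hu c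
      rw [Finset.sum_congr rfl (fun c _ => this c), Finset.sum_const, Finset.card_univ,
        nsmul_eq_mul, add_zero]
  have hsumX := summable_hfun_X Fq hr (s := s) (x := x) ht
  have hsumIte : Summable (fun u : Polynomial Fq => if u = 0 then (1 - q) * Et else 0) :=
    summable_of_ne_finset_zero (s := {(0 : Polynomial Fq)})
      (fun u hu => if_neg (by simpa using hu))
  calc ∑' p, h p = ∑' u : Polynomial Fq, ∑' c : Fq, h (polyEquiv Fq (u, c)) := hchain
    _ = ∑' u : Polynomial Fq,
        (q * h (Polynomial.X * u) + (if u = 0 then (1 - q) * Et else 0)) :=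
      tsum_congr hinner
    _ = q * (∑' u, h (Polynomial.X * u)) + (1 - q) * Et := by
      rw [Summable.tsum_add (hsumX.mul_left q) hsumIte, tsum_mul_left, tsum_ite_eq]
    _ = q * (∑' u, h (Polynomial.X * u)) - (q - 1) * Et := by ring

end St11

namespace St11

variable (Fq : Type) [Field Fq] [Fintype Fq]

lemma mul_min_real (c a b : ℝ) (hc : 0 ≤ c) : c * min a b = min (c * a) (c * b) := by
  rcases le_total a b with h | h
  · rw [min_eq_left h, min_eq_left (by nlinarith)]
  · rw [min_eq_right h, min_eq_right (by nlinarith)]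

lemma Efun_fin0 (r : ℕ) (s : Fin 0 → ℝ) (w : ℝ) : Efun Fq r 0 s w = max w 0 := by
  rw [Efun, tsum_eq_single (fun i : Fin 0 => (0 : Polynomial Fq))
    (fun b' hb' => (hb' (funext fun i => i.elim0)).elim)]
  rw [termf, mfun, Real.iSup_of_isEmpty, sub_zero]

lemma key (r : ℕ) (hr : 1 ≤ r) (n : ℕ) : ∀ (s : Fin n → ℝ), (∀ i, 0 < s i) → Monotone s →
    ∀ x : ℝ, 0 ≤ x → (∀ i, s i ≤ x) →
    (Fintype.card Fq : ℝ) ^ (r + n) * Efun Fq r n s (((Fintype.card Fq : ℝ) ^ r)⁻¹ * x) =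
      Efun Fq r n s x + ((Fintype.card Fq : ℝ) - 1) *
        ∑ i : Fin n, (Fintype.card Fq : ℝ) ^ (n - 1 - (i : ℕ)) *
          Efun Fq r (i : ℕ) (fun j : Fin (i : ℕ) => s (Fin.castLE i.isLt.le j)) (s i) := by
  have hq : (1 : ℝ) < (Fintype.card Fq : ℝ) := one_lt_q Fq
  have hq0 : (0 : ℝ) < (Fintype.card Fq : ℝ) := q_pos Fq
  induction n with
  | zero =>
    intro s hs hmono x hx0 hsx
    rw [Efun_fin0, Efun_fin0, max_eq_left hx0,
      max_eq_left (by positivity : (0:ℝ) ≤ ((Fintype.card Fq : ℝ) ^ r)⁻¹ * x)]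
    simp only [Nat.add_zero, Finset.univ_eq_empty, Finset.sum_empty, mul_zero, add_zero]
    field_simp
  | succ n IH =>
    intro s hs hmono x hx0 hsx
    classical
    set q : ℝ := (Fintype.card Fq : ℝ) with hqd
    set s' : Fin n → ℝ := fun j => s (Fin.castSucc j) with hs'd
    set t : ℝ := s (Fin.last n) with htd
    have hs'pos : ∀ j, 0 < s' j := fun j => hs _
    have hmono' : Monotone s' := fun a b hab =>
      hmono (show Fin.castSucc a ≤ Fin.castSucc b by rwa [Fin.castSucc_le_castSucc_iff])
    have hst : ∀ j, s' j ≤ t := fun j => hmono (Fin.le_last _)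
    have ht : 0 < t := hs _
    have htx : t ≤ x := hsx _
    set x' : ℝ := ((q : ℝ) ^ r)⁻¹ * x with hx'd
    have hx'0 : 0 ≤ x' := by positivity
    set C : ℝ := (q - 1) *
      ∑ i : Fin n, q ^ (n - 1 - (i : ℕ)) *
        Efun Fq r (i : ℕ) (fun j : Fin (i : ℕ) => s' (Fin.castLE i.isLt.le j)) (s' i) with hCd
    have IH' : ∀ w : ℝ, 0 ≤ w → (∀ j, s' j ≤ w) →
        q ^ (r + n) * Efun Fq r n s' ((q ^ r)⁻¹ * w) = Efun Fq r n s' w + C :=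
      fun w hw hw' => IH s' hs'pos hmono' w hw hw'
    set h : Polynomial Fq → ℝ := hfun Fq r n s' t x with hhd
    -- the two recursion identities
    have R1 : Efun Fq r (n + 1) s x = ∑' p, h p := Efun_succ Fq hr s hs x
    have R2 : Efun Fq r (n + 1) s x' =
        ∑' p : Polynomial Fq, (Efun Fq r n s' x' -
          Efun Fq r n s' (min x' ((absA Fq p) ^ r * t))) := Efun_succ Fq hr s hs x'
    -- transform each summand
    have hsummand : ∀ p : Polynomial Fq,
        q ^ (r + n) * (Efun Fq r n s' x' - Efun Fq r n s' (min x' ((absA Fq p) ^ r * t))) =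
          h (Polynomial.X * p) + (if p = 0 then C else 0) := by
      intro p
      by_cases hp : p = 0
      · subst hp
        rw [if_pos rfl, mul_zero, absA_zero, zero_pow (by omega : r ≠ 0), zero_mul,
          min_eq_right hx'0, Efun_zero Fq (fun j => (hs'pos j).le), sub_zero,
          IH' x hx0 (fun j => hsx _)]
        show Efun Fq r n s' x + C = h 0 + C
        rw [hhd, hfun, absA_zero, zero_pow (by omega : r ≠ 0), zero_mul,
          min_eq_right hx0, Efun_zero Fq (fun j => (hs'pos j).le), sub_zero]
      · rw [if_neg hp, add_zero]
        have hXp : Polynomial.X * p ≠ 0 := mul_ne_zero Polynomial.X_ne_zero hp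
        have habs : (absA Fq (Polynomial.X * p)) ^ r = q ^ r * (absA Fq p) ^ r := by
          rw [absA_X_mul, mul_pow]
        set w : ℝ := min x ((absA Fq (Polynomial.X * p)) ^ r * t) with hwd
        have hqr : ((q : ℝ) ^ r) ≠ 0 := by positivity
        have hmin : min x' ((absA Fq p) ^ r * t) = (q ^ r)⁻¹ * w := by
          rw [hwd, mul_min_real _ _ _ (by positivity : (0:ℝ) ≤ ((q:ℝ) ^ r)⁻¹), habs, hx'd]
          congr 1
          field_simp
        have hw0 : 0 ≤ w :=
          le_min hx0 (mul_nonneg (pow_nonneg (absA_nonneg Fq _) _) ht.le)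
        have hw' : ∀ j, s' j ≤ w := by
          intro j
          refine le_min (hsx _) ?_
          have h1 : (1 : ℝ) ≤ (absA Fq (Polynomial.X * p)) ^ r :=
            one_le_pow₀ (one_le_absA Fq hXp)
          nlinarith [hst j, ht]
        have e1 := IH' x hx0 (fun j => hsx _)
        rw [← hx'd] at e1
        have e2 := IH' w hw0 hw'
        rw [hmin, mul_sub, e1, e2, hhd, hfun, ← hwd]
        ring
    -- summability
    have hsumX := summable_hfun_X Fq hr (s := s') (x := x) ht
    have hsumIte : Summable (fun p : Polynomial Fq => if p = 0 then C else 0) :=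
      summable_of_ne_finset_zero (s := {(0 : Polynomial Fq)})
        (fun u hu => if_neg (by simpa using hu))
    -- main computation
    have main : q ^ (r + (n + 1)) * Efun Fq r (n + 1) s x' =
        Efun Fq r (n + 1) s x + (q - 1) * Efun Fq r n s' t + q * C := by
      have hre : (∑' p, h p) =
          q * (∑' u, h (Polynomial.X * u)) - (q - 1) * Efun Fq r n s' t :=
        hfun_reindex Fq hr (fun j => (hs'pos j).le) ht htx
      rw [R2, show r + (n + 1) = (r + n) + 1 by omega, pow_succ, mul_comm (q ^ (r+n)) q,
        mul_assoc, ← tsum_mul_left]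
      rw [tsum_congr hsummand, Summable.tsum_add hsumX hsumIte, tsum_ite_eq, R1, hre]
      ring
    -- identify the constant
    have hconst : (q - 1) * ∑ i : Fin (n + 1), q ^ (n + 1 - 1 - (i : ℕ)) *
          Efun Fq r (i : ℕ) (fun j : Fin (i : ℕ) => s (Fin.castLE i.isLt.le j)) (s i) =
        (q - 1) * Efun Fq r n s' t + q * C := by
      rw [Fin.sum_univ_castSucc]
      have hlast : q ^ (n + 1 - 1 - ((Fin.last n : Fin (n+1)) : ℕ)) *
          Efun Fq r ((Fin.last n : Fin (n+1)) : ℕ)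
            (fun j => s (Fin.castLE (Fin.last n).isLt.le j)) (s (Fin.last n)) =
          Efun Fq r n s' t := by
        have : n + 1 - 1 - ((Fin.last n : Fin (n+1)) : ℕ) = 0 := by simp
        rw [this, pow_zero, one_mul]
        rfl
      have hcast : ∀ i : Fin n, q ^ (n + 1 - 1 - ((Fin.castSucc i : Fin (n+1)) : ℕ)) *
          Efun Fq r ((Fin.castSucc i : Fin (n+1)) : ℕ)
            (fun j => s (Fin.castLE (Fin.castSucc i).isLt.le j)) (s (Fin.castSucc i)) =
          q * (q ^ (n - 1 - (i : ℕ)) *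
            Efun Fq r (i : ℕ) (fun j : Fin (i : ℕ) => s' (Fin.castLE i.isLt.le j)) (s' i)) := by
        intro i
        have he : n + 1 - 1 - ((Fin.castSucc i : Fin (n+1)) : ℕ) = (n - 1 - (i : ℕ)) + 1 := by
          have := i.isLt
          simp only [Fin.coe_castSucc]
          omega
        have harg : Efun Fq r ((Fin.castSucc i : Fin (n+1)) : ℕ)
            (fun j => s (Fin.castLE (Fin.castSucc i).isLt.le j)) (s (Fin.castSucc i)) =
            Efun Fq r (i : ℕ) (fun j : Fin (i : ℕ) => s' (Fin.castLE i.isLt.le j)) (s' i) := rfl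
        rw [harg, he, pow_succ]
        ring
      rw [Finset.sum_congr rfl (fun i _ => hcast i), hlast, hCd, ← Finset.mul_sum]
      ring
    rw [main, hconst]
    ring

end St11

namespace St11

variable (Fq : Type) [Field Fq] [Fintype Fq]

lemma eps_eq_Efun {r n : ℕ} (hr : 1 ≤ r) {s : Fin n → ℝ} (hs : ∀ i, 0 < s i)
    {x : ℝ} (hx : 0 ≤ x) : epsFun Fq r n s x = Efun Fq r n s x := by
  classical
  have hterm0 : termf Fq r n s x 0 = x := by
    rw [termf, mfun]
    have : ∀ i : Fin n, (absA Fq ((0 : Fin n → Polynomial Fq) i)) ^ r * s i = 0 := by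
      intro i
      rw [show (0 : Fin n → Polynomial Fq) i = 0 from rfl, absA_zero,
        zero_pow (by omega : r ≠ 0), zero_mul]
    rw [show (⨆ i : Fin n, (absA Fq ((0 : Fin n → Polynomial Fq) i)) ^ r * s i) = (0:ℝ) from ?_]
    · rw [sub_zero, max_eq_left hx]
    · rcases isEmpty_or_nonempty (Fin n) with h | h
      · exact Real.iSup_of_isEmpty _
      · simp only [this]
        exact ciSup_const
  set g : (Fin n → Polynomial Fq) → ℝ :=
    fun y => if y = 0 then 0 else termf Fq r n s x y with hgd
  have h1 : Efun Fq r n s x = termf Fq r n s x 0 + ∑' y, g y :=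
    Summable.tsum_eq_add_tsum_ite (summable_termf Fq hr hs x) 0
  have h2 : (∑' y : {y : Fin n → Polynomial Fq // y ≠ 0},
      max (x - ⨆ i : Fin n, (absA Fq (y.1 i)) ^ r * s i) 0) =
      ∑' y : {y : Fin n → Polynomial Fq // y ≠ 0}, g y.1 :=
    tsum_congr (fun y => by
      rw [hgd]
      simp only [if_neg y.2]
      rfl)
  have h3 : (∑' y : {y : Fin n → Polynomial Fq // y ≠ 0}, g y.1) = ∑' y, g y := by
    refine tsum_subtype_eq_of_support_subset ?_
    intro y hy
    simp only [Function.mem_support, hgd] at hy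
    show y ≠ 0
    intro h0
    exact hy (by rw [if_pos h0])
  rw [epsFun, h2, h3, h1, hterm0]

end St11

open St11 in
/-- Let `r ≥ 1`, `n ≥ 1` and `s ∈ ℝ_{>0}^n` be nondecreasing, and let
`x ∈ ℝ` with `s_n ≤ x`.  Then `ε̂^{r,n}_s(x) = q^{r+n}·ε̂^{r,n}_s(q^{−r}·x)`. -/
theorem statement11 (Fq : Type) [Field Fq] [Fintype Fq]
    (r n : ℕ) (hr : 1 ≤ r) (hn : 1 ≤ n) (s : Fin n → ℝ) (hs : ∀ i, 0 < s i)
    (hmono : Monotone s) (x : ℝ) (hx : s ⟨n - 1, by omega⟩ ≤ x) :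
    epsHat Fq r n s x =
      (Fintype.card Fq : ℝ) ^ (r + n) *
        epsHat Fq r n s (((Fintype.card Fq : ℝ) ^ r)⁻¹ * x) := by
  have hq : (1 : ℝ) < (Fintype.card Fq : ℝ) := one_lt_q Fq
  have hsx : ∀ i, s i ≤ x := by
    intro i
    refine le_trans (hmono ?_) hx
    rw [Fin.le_def]
    simp only []
    have := i.isLt
    omega
  have hx0 : 0 ≤ x := le_trans (hs _).le hx
  have hx'0 : 0 ≤ ((Fintype.card Fq : ℝ) ^ r)⁻¹ * x := by positivity
  have hkey := key Fq r hr n s hs hmono x hx0 hsx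
  rw [← eps_eq_Efun Fq hr hs hx'0, ← eps_eq_Efun Fq hr hs hx0] at hkey
  have hsum_eq : (∑ i : Fin n, (Fintype.card Fq : ℝ) ^ (n - 1 - (i : ℕ)) *
        Efun Fq r (i : ℕ) (fun j : Fin (i : ℕ) => s (Fin.castLE i.isLt.le j)) (s i)) =
      ∑ i : Fin n, (Fintype.card Fq : ℝ) ^ (n - 1 - (i : ℕ)) *
        epsFun Fq r (i : ℕ) (fun j : Fin (i : ℕ) => s (Fin.castLE i.isLt.le j)) (s i) :=
    Finset.sum_congr rfl (fun i _ => by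
      rw [eps_eq_Efun Fq hr (fun j => hs _) (hs i).le])
  rw [hsum_eq] at hkey
  have hden : ((Fintype.card Fq : ℝ) ^ (r + n) - 1) ≠ 0 := by
    have : (1:ℝ) < (Fintype.card Fq : ℝ) ^ (r + n) := one_lt_pow₀ hq (by omega)
    linarith
  have hD : deltaFun Fq r n s * ((Fintype.card Fq : ℝ) ^ (r + n) - 1) =
      ((Fintype.card Fq : ℝ) - 1) *
        ∑ i : Fin n, (Fintype.card Fq : ℝ) ^ (n - 1 - (i : ℕ)) *
          epsFun Fq r (i : ℕ) (fun j : Fin (i : ℕ) => s (Fin.castLE i.isLt.le j)) (s i) := by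
    rw [deltaFun]
    field_simp
  simp only [epsHat]
  linear_combination hD - hkey
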